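/- Let P : ℝⁿ \ {0} → ℝ be positively homogeneous of degree 1, and suppose that for each i the function y ↦ P(y) y^i is a quadratic form in y (i.e., a homogeneous polynomial of degree 2). If n ≥ 2, then P is a linear form: P(y) = θ_i y^i for some constants θ_i. -/
import Mathlib

/-- If `P` is positively 1-homogeneous on `ℝⁿ \ {0}` (`n ≥ 2`) and each
`y ↦ P(y)y^i` is a quadratic form, then `P` is a linear form `θ_iy^i`. -/
theorem stmt13 (n : ℕ) (hn : 2 ≤ n) (P : (Fin n → ℝ) → ℝ)
    (hhom : ∀ c : ℝ, 0 < c → ∀ y : Fin n → ℝ, y ≠ 0 → P (c • y) = c * P y)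
    (hquad : ∀ i : Fin n, ∃ Q : Matrix (Fin n) (Fin n) ℝ,
      ∀ y : Fin n → ℝ, y ≠ 0 → P y * y i = ∑ j, ∑ k, Q j k * y j * y k) :
    ∃ θ : Fin n → ℝ, ∀ y : Fin n → ℝ, y ≠ 0 → P y = ∑ i, θ i * y i := by
  choose Q hQ using hquad
  set θ : Fin n → ℝ := fun k => Q k k k with hθ
  have key : ∀ y : Fin n → ℝ, y ≠ 0 → ∀ i j : Fin n,
      (∑ a, ∑ b, Q i a b * y a * y b) * y j = (∑ a, ∑ b, Q j a b * y a * y b) * y i := by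
    intro y hy i j
    rw [← hQ i y hy, ← hQ j y hy]; ring
  have sum_one : ∀ (a : Fin n) (f : Fin n → ℝ), (∀ t, t ≠ a → f t = 0) → ∑ t, f t = f a := by
    intro a f h
    exact Finset.sum_eq_single_of_mem a (Finset.mem_univ a) fun t _ ht => h t ht
  have sum_two : ∀ (a b : Fin n), a ≠ b → ∀ f : Fin n → ℝ,
      (∀ t, t ≠ a → t ≠ b → f t = 0) → ∑ t, f t = f a + f b := by
    intro a b hab f h
    rw [← Finset.sum_pair hab]
    refine (Finset.sum_subset (Finset.subset_univ _) fun x _ hx => ?_).symm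
    simp only [Finset.mem_insert, Finset.mem_singleton, not_or] at hx
    exact h x hx.1 hx.2
  have ev1 : ∀ (i a : Fin n),
      (∑ j, ∑ k, Q i j k * (Pi.single a 1 : Fin n → ℝ) j * (Pi.single a 1 : Fin n → ℝ) k)
        = Q i a a := by
    intro i a
    rw [sum_one a _ (fun t ht => Finset.sum_eq_zero fun k _ => by
      simp [Pi.single_eq_of_ne ht])]
    rw [sum_one a _ (fun t ht => by simp [Pi.single_eq_of_ne ht])]
    simp
  have ev2 : ∀ (i a b : Fin n), a ≠ b → ∀ u v : ℝ,
      (∑ j, ∑ k, Q i j k * (Pi.single a u + Pi.single b v : Fin n → ℝ) j *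
        (Pi.single a u + Pi.single b v : Fin n → ℝ) k)
      = Q i a a * u * u + Q i a b * u * v + Q i b a * v * u + Q i b b * v * v := by
    intro i a b hab u v
    set w : Fin n → ℝ := (Pi.single a u + Pi.single b v : Fin n → ℝ) with hw
    have hwa : w a = u := by simp [hw, Pi.single_eq_of_ne hab]
    have hwb : w b = v := by simp [hw, Pi.single_eq_of_ne (Ne.symm hab)]
    have hwt : ∀ t, t ≠ a → t ≠ b → w t = 0 := by
      intro t ht1 ht2
      simp [hw, Pi.single_eq_of_ne ht1, Pi.single_eq_of_ne ht2]
    rw [sum_two a b hab _ (fun t ht1 ht2 => Finset.sum_eq_zero fun k _ => by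
      simp [hwt t ht1 ht2])]
    rw [sum_two a b hab _ (fun t ht1 ht2 => by simp [hwt t ht1 ht2])]
    rw [sum_two a b hab _ (fun t ht1 ht2 => by simp [hwt t ht1 ht2])]
    rw [hwa, hwb]; ring
  have hne1 : ∀ a : Fin n, (Pi.single a 1 : Fin n → ℝ) ≠ 0 := by
    intro a h
    have := congrFun h a
    simp at this
  have hne2 : ∀ (a b : Fin n), a ≠ b → ∀ v : ℝ,
      (Pi.single a 1 + Pi.single b v : Fin n → ℝ) ≠ 0 := by
    intro a b hab v h
    have := congrFun h a
    simp [Pi.single_eq_of_ne hab] at this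
  have fact1 : ∀ i a : Fin n, i ≠ a → Q i a a = 0 := by
    intro i a hia
    have := key (Pi.single a 1 : Fin n → ℝ) (hne1 a) i a
    rw [ev1 i a, ev1 a a, Pi.single_eq_same, Pi.single_eq_of_ne hia, mul_one, mul_zero] at this
    exact this
  have fact2 : ∀ i a b : Fin n, a ≠ b → i ≠ a → i ≠ b → Q i a b + Q i b a = 0 := by
    intro i a b hab hia hib
    have h := key ((Pi.single a 1 + Pi.single b 1 : Fin n → ℝ)) (hne2 a b hab 1) i a
    rw [ev2 i a b hab 1 1, ev2 a a b hab 1 1] at h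
    have hwa : ((Pi.single a 1 + Pi.single b 1 : Fin n → ℝ)) a = 1 := by
      simp [Pi.single_eq_of_ne hab]
    have hwi : ((Pi.single a 1 + Pi.single b 1 : Fin n → ℝ)) i = 0 := by
      simp [Pi.single_eq_of_ne hia, Pi.single_eq_of_ne hib]
    rw [hwa, hwi, mul_one, mul_zero] at h
    have h1 := fact1 i a hia
    have h2 := fact1 i b hib
    nlinarith [h, h1, h2]
  have fact3 : ∀ a b : Fin n, a ≠ b → Q a a b + Q a b a = θ b := by
    intro a b hab
    have hba := Ne.symm hab
    have h1 := key ((Pi.single a 1 + Pi.single b 1 : Fin n → ℝ)) (hne2 a b hab 1) b a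
    rw [ev2 b a b hab 1 1, ev2 a a b hab 1 1] at h1
    have hwa1 : ((Pi.single a 1 + Pi.single b 1 : Fin n → ℝ)) a = 1 := by
      simp [Pi.single_eq_of_ne hab]
    have hwb1 : ((Pi.single a 1 + Pi.single b 1 : Fin n → ℝ)) b = 1 := by
      simp [Pi.single_eq_of_ne hba]
    rw [hwa1, hwb1, mul_one, mul_one] at h1
    have h2 := key ((Pi.single a 1 + Pi.single b (-1) : Fin n → ℝ)) (hne2 a b hab (-1)) b a
    rw [ev2 b a b hab 1 (-1), ev2 a a b hab 1 (-1)] at h2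
    have hwa2 : ((Pi.single a 1 + Pi.single b (-1) : Fin n → ℝ)) a = 1 := by
      simp [Pi.single_eq_of_ne hab]
    have hwb2 : ((Pi.single a 1 + Pi.single b (-1) : Fin n → ℝ)) b = -1 := by
      simp [Pi.single_eq_of_ne hba]
    rw [hwa2, hwb2, mul_one] at h2
    have hA := fact1 b a hba
    have hB := fact1 a b hab
    simp only [hθ]
    nlinarith [h1, h2, hA, hB]
  have hC : ∀ i a b : Fin n, Q i a b + Q i b a
      = (if i = a then θ b else 0) + (if i = b then θ a else 0) := by
    intro i a b
    by_cases hab : a = b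
    · subst hab
      by_cases hia : i = a
      · subst hia; simp [hθ]
      · simp [hia, fact1 i a hia]
    · by_cases hia : i = a
      · subst hia
        rw [if_pos rfl, if_neg (show i ≠ b from hab), fact3 i b hab]; ring
      · by_cases hib : i = b
        · subst hib
          rw [if_neg hia, if_pos rfl]
          have h := fact3 i a (fun h => hab h.symm)
          linarith
        · rw [if_neg hia, if_neg hib, fact2 i a b hab hia hib]; ring
  have hGi : ∀ (i : Fin n) (y : Fin n → ℝ),
      (∑ a, ∑ b, Q i a b * y a * y b) = y i * ∑ k, θ k * y k := by
    intro i y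
    have swap : (∑ a, ∑ b, Q i b a * y a * y b) = ∑ a, ∑ b, Q i a b * y a * y b := by
      rw [Finset.sum_comm]
      exact Finset.sum_congr rfl fun a _ => Finset.sum_congr rfl fun b _ => by ring
    have expand : ∑ a, ∑ b, (Q i a b + Q i b a) * y a * y b
        = (∑ a, ∑ b, Q i a b * y a * y b) + (∑ a, ∑ b, Q i b a * y a * y b) := by
      simp only [add_mul, Finset.sum_add_distrib]
    have rhs1 : ∑ a, ∑ b, (if i = a then θ b else 0) * y a * y b
        = y i * ∑ k, θ k * y k := by
      rw [Finset.sum_comm, Finset.mul_sum]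
      refine Finset.sum_congr rfl fun b _ => ?_
      have h : ∀ a, (if i = a then θ b else 0) * y a * y b
          = if i = a then θ b * y a * y b else 0 := by
        intro a; split <;> ring
      simp only [h, Finset.sum_ite_eq, Finset.mem_univ, if_true]
      ring
    have rhs2 : ∑ a, ∑ b, (if i = b then θ a else 0) * y a * y b
        = y i * ∑ k, θ k * y k := by
      rw [Finset.mul_sum]
      refine Finset.sum_congr rfl fun a _ => ?_
      have h : ∀ b, (if i = b then θ a else 0) * y a * y b
          = if i = b then θ a * y a * y b else 0 := by
        intro b; split <;> ring
      simp only [h, Finset.sum_ite_eq, Finset.mem_univ, if_true]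
      ring
    have big : ∑ a, ∑ b, (Q i a b + Q i b a) * y a * y b
        = y i * (∑ k, θ k * y k) + y i * (∑ k, θ k * y k) := by
      have step : ∀ a b, (Q i a b + Q i b a) * y a * y b
          = (if i = a then θ b else 0) * y a * y b + (if i = b then θ a else 0) * y a * y b := by
        intro a b; rw [hC i a b]; ring
      calc ∑ a, ∑ b, (Q i a b + Q i b a) * y a * y b
          = ∑ a, ∑ b, ((if i = a then θ b else 0) * y a * y b
              + (if i = b then θ a else 0) * y a * y b) :=
            Finset.sum_congr rfl fun a _ => Finset.sum_congr rfl fun b _ => step a b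
        _ = (∑ a, ∑ b, (if i = a then θ b else 0) * y a * y b)
              + ∑ a, ∑ b, (if i = b then θ a else 0) * y a * y b := by
            simp only [Finset.sum_add_distrib]
        _ = y i * (∑ k, θ k * y k) + y i * (∑ k, θ k * y k) := by rw [rhs1, rhs2]
    rw [expand, swap] at big
    linarith [big]
  refine ⟨θ, fun y hy => ?_⟩
  obtain ⟨i, hi⟩ : ∃ i, y i ≠ 0 := by
    by_contra h
    push_neg at h
    exact hy (funext h)
  refine mul_right_cancel₀ hi ?_
  rw [hQ i y hy, hGi i y]
  ring
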